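/- Discrete nonlocal gradient-elasticity variational identity (Eq. (76)): in the discrete nonlocal setting, let g : I × I → ℝ^d, h : I × I → ℝ^{d×d}, ω : I × I → ℝ, b : I → ℝ^d, and let ψ : ℝ^{d×d} × (ℝ^d → ℝ^{d×d}-indexed third-order tensors ℝ^{d×d×d}) → ℝ be differentiable. For u : I → ℝ^d define G_i(u) := ∑_{j∈S(i)} ω(i,j)·(u(j)−u(i))·g(i,j)ᵀ·V(j), H_i(u) ∈ ℝ^{d×d×d} by (H_i)_{abc} := ∑_{j∈S(i)} ω(i,j)·(u(j)−u(i))_a·(h(i,j))_{bc}·V(j), and E(u) := ∑_{i∈I} ψ(G_i(u), H_i(u))·V(i) − ∑_{i∈I} ⟪b(i), u(i)⟫·V(i). Let σ_i ∈ ℝ^{d×d} and Σ_i ∈ ℝ^{d×d×d} denote the arrays of partial derivatives of ψ with respect to its first and second arguments at (G_i(u), H_i(u)), and write (Σ_i : h)_a := ∑_{b,c} (Σ_i)_{abc}·h_{bc}. Then for every variation δ : I → ℝ^d, (d/dt)E(u + t·δ)|_{t=0} = ∑_{i∈I} ⟪ ∑_{j∈S'(i)} ω(j,i)·( σ_j·g(j,i)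 + Σ_j : h(j,i) )·V(j) − ∑_{j∈S(i)} ω(i,j)·( σ_i·g(i,j) + Σ_i : h(i,j) )·V(j) − b(i), δ(i) ⟫·V(i). -/

import Mathlib

open Finset Matrix

private lemma swap3 {α β γ : Type*} [Fintype β] [Fintype γ] (s : Finset α) (F : β → γ → α → ℝ) :
    ∑ a, ∑ c, ∑ j ∈ s, F a c j = ∑ j ∈ s, ∑ a, ∑ c, F a c j :=
  calc ∑ a, ∑ c, ∑ j ∈ s, F a c j
      = ∑ a, ∑ j ∈ s, ∑ c, F a c j := Finset.sum_congr rfl fun _ _ => Finset.sum_comm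
    _ = ∑ j ∈ s, ∑ a, ∑ c, F a c j := Finset.sum_comm

private lemma swap4 {α β γ ε : Type*} [Fintype β] [Fintype γ] [Fintype ε]
    (s : Finset α) (F : β → γ → ε → α → ℝ) :
    ∑ a, ∑ bc, ∑ cc, ∑ j ∈ s, F a bc cc j = ∑ j ∈ s, ∑ a, ∑ bc, ∑ cc, F a bc cc j :=
  calc ∑ a, ∑ bc, ∑ cc, ∑ j ∈ s, F a bc cc j
      = ∑ a, ∑ j ∈ s, ∑ bc, ∑ cc, F a bc cc j :=
        Finset.sum_congr rfl fun a _ => swap3 s (F a)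
    _ = ∑ j ∈ s, ∑ a, ∑ bc, ∑ cc, F a bc cc j := Finset.sum_comm

private lemma finsum_dotProduct {α : Type*} {d : ℕ} (s : Finset α)
    (v : α → Fin d → ℝ) (w : Fin d → ℝ) :
    (∑ j ∈ s, v j) ⬝ᵥ w = ∑ j ∈ s, v j ⬝ᵥ w := by
  simp only [dotProduct, Finset.sum_apply, Finset.sum_mul]
  exact Finset.sum_comm

private lemma swap_support {I : Type*} [Fintype I] [DecidableEq I]
    (S : I → Finset I) (R : I → I → ℝ) :
    ∑ i, ∑ j ∈ S i, R i j = ∑ i, ∑ j ∈ univ.filter (fun j => i ∈ S j), R j i := by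
  have h1 : ∀ i : I, ∑ j ∈ S i, R i j = ∑ j, if j ∈ S i then R i j else 0 := by
    intro i
    rw [Finset.sum_ite_mem, Finset.univ_inter]
  have h2 : ∀ i : I, ∑ j ∈ univ.filter (fun j => i ∈ S j), R j i
      = ∑ j, if i ∈ S j then R j i else 0 := by
    intro i
    rw [Finset.sum_filter]
  simp_rw [h1, h2]
  exact Finset.sum_comm

/-- Discrete nonlocal gradient-elasticity variational identity (Eq. (76)). -/
theorem nonlocal_gradient_elasticity_variational
    {I : Type*} [Fintype I] [DecidableEq I] {d : ℕ}
    (V : I → ℝ) (S : I → Finset I)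
    (g : I → I → Fin d → ℝ) (h : I → I → Matrix (Fin d) (Fin d) ℝ)
    (ω : I → I → ℝ) (b : I → Fin d → ℝ)
    (ψ : Matrix (Fin d) (Fin d) ℝ → (Fin d → Fin d → Fin d → ℝ) → ℝ)
    (G : (I → Fin d → ℝ) → I → Matrix (Fin d) (Fin d) ℝ)
    (hG : ∀ u i, G u i = ∑ j ∈ S i, (ω i j * V j) • vecMulVec (u j - u i) (g i j))
    (H : (I → Fin d → ℝ) → I → Fin d → Fin d → Fin d → ℝ)
    (hH : ∀ u i a bc cc, H u i a bc cc = ∑ j ∈ S i, ω i j * (u j a - u i a) * h i j bc cc * V j)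
    (E : (I → Fin d → ℝ) → ℝ)
    (hE : ∀ u, E u = (∑ i, ψ (G u i) (H u i) * V i) - ∑ i, (b i ⬝ᵥ u i) * V i)
    (u : I → Fin d → ℝ)
    (σ : I → Matrix (Fin d) (Fin d) ℝ) (Sg : I → Fin d → Fin d → Fin d → ℝ)
    (hψ : ∀ i (Hg : Matrix (Fin d) (Fin d) ℝ) (Hh : Fin d → Fin d → Fin d → ℝ),
        HasDerivAt (fun t : ℝ => ψ (G u i + t • Hg) (H u i + t • Hh))
          ((∑ a, ∑ c, σ i a c * Hg a c) + ∑ a, ∑ bc, ∑ cc, Sg i a bc cc * Hh a bc cc) 0) :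
    ∀ δ : I → Fin d → ℝ,
      HasDerivAt (fun t : ℝ => E (u + t • δ))
        (∑ i, (((∑ j ∈ univ.filter (fun j => i ∈ S j),
              (ω j i * V j) • ((σ j *ᵥ g j i) + fun a => ∑ bc, ∑ cc, Sg j a bc cc * h j i bc cc))
            - (∑ j ∈ S i,
              (ω i j * V j) • ((σ i *ᵥ g i j) + fun a => ∑ bc, ∑ cc, Sg i a bc cc * h i j bc cc))
            - b i) ⬝ᵥ δ i) * V i) 0 := by
  intro δ
  classical
  set Hg : I → Matrix (Fin d) (Fin d) ℝ :=
    fun i => ∑ j ∈ S i, (ω i j * V j) • vecMulVec (δ j - δ i) (g i j) with hHgdef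
  set Hh : I → Fin d → Fin d → Fin d → ℝ :=
    fun i a bc cc => ∑ j ∈ S i, ω i j * (δ j a - δ i a) * h i j bc cc * V j with hHhdef
  have hGt : ∀ (t : ℝ) (i : I), G (u + t • δ) i = G u i + t • Hg i := by
    intro t i
    rw [hG, hG, hHgdef]
    rw [Finset.smul_sum, ← Finset.sum_add_distrib]
    refine Finset.sum_congr rfl fun j _ => ?_
    ext a c
    simp only [vecMulVec_apply, Pi.add_apply, Pi.smul_apply, Pi.sub_apply, smul_eq_mul,
      Matrix.smul_apply, Matrix.add_apply]
    ring
  have hHt : ∀ (t : ℝ) (i : I), H (u + t • δ) i = H u i + t • Hh i := by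
    intro t i
    funext a bc cc
    simp only [Pi.add_apply, Pi.smul_apply, smul_eq_mul, hH, hHhdef]
    rw [Finset.mul_sum, ← Finset.sum_add_distrib]
    refine Finset.sum_congr rfl fun j _ => ?_
    ring
  have key : ∀ i : I, HasDerivAt (fun t : ℝ => ψ (G (u + t • δ) i) (H (u + t • δ) i) * V i)
      ((((∑ a, ∑ c, σ i a c * Hg i a c)
        + ∑ a, ∑ bc, ∑ cc, Sg i a bc cc * Hh i a bc cc)) * V i) 0 := by
    intro i
    have heq : (fun t : ℝ => ψ (G (u + t • δ) i) (H (u + t • δ) i) * V i)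
        = fun t : ℝ => ψ (G u i + t • Hg i) (H u i + t • Hh i) * V i := by
      funext t; rw [hGt, hHt]
    rw [heq]
    exact (hψ i (Hg i) (Hh i)).mul_const (V i)
  have keyb : ∀ i : I, HasDerivAt (fun t : ℝ => (b i ⬝ᵥ (u + t • δ) i) * V i)
      ((b i ⬝ᵥ δ i) * V i) 0 := by
    intro i
    have heq : (fun t : ℝ => (b i ⬝ᵥ (u + t • δ) i) * V i)
        = fun t : ℝ => (b i ⬝ᵥ u i) * V i + ((b i ⬝ᵥ δ i) * V i) * t := by
      funext t
      simp only [dotProduct, Pi.add_apply, Pi.smul_apply, smul_eq_mul, Finset.sum_mul,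
        Finset.mul_sum, ← Finset.sum_add_distrib]
      refine Finset.sum_congr rfl fun x _ => ?_
      ring
    rw [heq]
    simpa using ((hasDerivAt_id (0:ℝ)).const_mul ((b i ⬝ᵥ δ i) * V i)).const_add
      ((b i ⬝ᵥ u i) * V i)
  have hD : HasDerivAt (fun t : ℝ => E (u + t • δ))
      ((∑ i, (((∑ a, ∑ c, σ i a c * Hg i a c)
          + ∑ a, ∑ bc, ∑ cc, Sg i a bc cc * Hh i a bc cc)) * V i)
        - ∑ i, (b i ⬝ᵥ δ i) * V i) 0 := by
    have heq : (fun t : ℝ => E (u + t • δ))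
        = fun t : ℝ => (∑ i, ψ (G (u + t • δ) i) (H (u + t • δ) i) * V i)
            - ∑ i, (b i ⬝ᵥ (u + t • δ) i) * V i := by
      funext t; rw [hE]
    rw [heq]
    exact (HasDerivAt.fun_sum fun i _ => key i).sub (HasDerivAt.fun_sum fun i _ => keyb i)
  convert hD using 1
  -- the combined flux vector
  set T : I → I → Fin d → ℝ := fun i j =>
    (ω i j * V j) • ((σ i *ᵥ g i j) + fun a => ∑ bc, ∑ cc, Sg i a bc cc * h i j bc cc) with hTdef
  have core : ∀ i : I,
      (∑ a, ∑ c, σ i a c * Hg i a c) + (∑ a, ∑ bc, ∑ cc, Sg i a bc cc * Hh i a bc cc)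
        = ∑ j ∈ S i, T i j ⬝ᵥ (δ j - δ i) := by
    intro i
    have eg : ∑ a, ∑ c, σ i a c * Hg i a c
        = ∑ j ∈ S i, ∑ a, ∑ c, σ i a c * ((ω i j * V j) * ((δ j a - δ i a) * g i j c)) := by
      rw [← swap3]
      refine Finset.sum_congr rfl fun a _ => Finset.sum_congr rfl fun c _ => ?_
      simp only [hHgdef, Finset.sum_apply, Matrix.sum_apply, Matrix.smul_apply, vecMulVec_apply,
        Pi.sub_apply, smul_eq_mul, Finset.mul_sum]
    have eh : ∑ a, ∑ bc, ∑ cc, Sg i a bc cc * Hh i a bc cc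
        = ∑ j ∈ S i, ∑ a, ∑ bc, ∑ cc,
            Sg i a bc cc * (ω i j * (δ j a - δ i a) * h i j bc cc * V j) := by
      rw [← swap4]
      refine Finset.sum_congr rfl fun a _ => Finset.sum_congr rfl fun bc _ =>
        Finset.sum_congr rfl fun cc _ => ?_
      simp only [hHhdef]
      rw [Finset.mul_sum]
    rw [eg, eh, ← Finset.sum_add_distrib]
    refine Finset.sum_congr rfl fun j _ => ?_
    simp only [hTdef, dotProduct, Pi.smul_apply, Pi.add_apply, Pi.sub_apply, smul_eq_mul,
      mulVec]
    rw [← Finset.sum_add_distrib]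
    refine Finset.sum_congr rfl fun a _ => ?_
    rw [mul_add, add_mul]
    congr 1
    · rw [Finset.mul_sum, Finset.sum_mul]
      exact Finset.sum_congr rfl fun c _ => by ring
    · rw [Finset.mul_sum, Finset.sum_mul]
      refine Finset.sum_congr rfl fun bc _ => ?_
      rw [Finset.mul_sum, Finset.sum_mul]
      exact Finset.sum_congr rfl fun cc _ => by ring
  simp_rw [core]
  have expand : ∀ i : I, (∑ j ∈ S i, T i j ⬝ᵥ (δ j - δ i)) * V i
      = (∑ j ∈ S i, (T i j ⬝ᵥ δ j) * V i) - ∑ j ∈ S i, (T i j ⬝ᵥ δ i) * V i := by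
    intro i
    rw [← Finset.sum_sub_distrib, Finset.sum_mul]
    refine Finset.sum_congr rfl fun j _ => ?_
    rw [dotProduct_sub]
    ring
  simp_rw [expand, Finset.sum_sub_distrib]
  have hA : ∑ i, ((∑ j ∈ univ.filter (fun j => i ∈ S j),
        (ω j i * V j) • ((σ j *ᵥ g j i) + fun a => ∑ bc, ∑ cc, Sg j a bc cc * h j i bc cc))
          ⬝ᵥ δ i) * V i
      = ∑ i, ∑ j ∈ S i, (T i j ⬝ᵥ δ j) * V i := by
    rw [swap_support S (fun i j => (T i j ⬝ᵥ δ j) * V i)]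
    refine Finset.sum_congr rfl fun i _ => ?_
    rw [finsum_dotProduct, Finset.sum_mul]
    refine Finset.sum_congr rfl fun j _ => ?_
    simp only [hTdef, smul_dotProduct, smul_eq_mul]
    ring
  have hB : ∑ i, ((∑ j ∈ S i,
        (ω i j * V j) • ((σ i *ᵥ g i j) + fun a => ∑ bc, ∑ cc, Sg i a bc cc * h i j bc cc))
          ⬝ᵥ δ i) * V i
      = ∑ i, ∑ j ∈ S i, (T i j ⬝ᵥ δ i) * V i := by
    refine Finset.sum_congr rfl fun i _ => ?_
    rw [finsum_dotProduct, Finset.sum_mul]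
  simp_rw [sub_dotProduct, sub_mul, Finset.sum_sub_distrib]
  rw [hA, hB]
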